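/- Let φ be a GFG-QPTL formula and 𝔄₁, 𝔄₂ hyperassignments with 𝔄₁ ⊑ 𝔄₂. Then 𝔄₁ ⊨^{EA} φ implies 𝔄₂ ⊨^{EA} φ, and 𝔄₂ ⊨^{AE} φ implies 𝔄₁ ⊨^{AE} φ. (Theorem 2, Hyperassignment Refinement.) -/

import Mathlib

namespace GFG

/-- Temporal valuations. -/
abbrev Val : Type := ℕ → Bool

/-- Assignments over a type `AP` of atomic propositions. -/
abbrev Asg (AP : Type*) : Type _ := AP → Val

section Hyper

variable {X : Type*}

/-- A hyperassignment: a nonempty set of subsets not containing `∅`. -/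
def IsHyp (𝔄 : Set (Set X)) : Prop := 𝔄 ≠ ∅ ∧ ∅ ∉ 𝔄

/-- A choice function for `𝔄`. -/
def IsChoice (𝔄 : Set (Set X)) (ϑ : Set X → X) : Prop := ∀ W ∈ 𝔄, ϑ W ∈ W

/-- The dual hyperassignment. -/
def hdual (𝔄 : Set (Set X)) : Set (Set X) :=
  { Y | ∃ ϑ : Set X → X, IsChoice 𝔄 ϑ ∧ Y = ϑ '' 𝔄 }

/-- The preorder `⊑` on hyperassignments. -/
def hle (𝔄₁ 𝔄₂ : Set (Set X)) : Prop := ∀ W₁ ∈ 𝔄₁, ∃ W₂ ∈ 𝔄₂, W₂ ⊆ W₁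

/-- The equivalence `≡` on hyperassignments. -/
def heqv (𝔄₁ 𝔄₂ : Set (Set X)) : Prop := hle 𝔄₁ 𝔄₂ ∧ hle 𝔄₂ 𝔄₁

/-- `par 𝔄`: partitions of `𝔄` into two disjoint parts. -/
def par (𝔄 : Set (Set X)) : Set (Set (Set X) × Set (Set X)) :=
  { pr | pr.1 ∪ pr.2 = 𝔄 ∧ Disjoint pr.1 pr.2 }

end Hyper

variable {AP : Type*}

/-- `a₁ ≈_p^{>k} a₂`. -/
def ApproxGT (p : AP) (k : ℕ) (a₁ a₂ : Asg AP) : Prop :=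
  (∀ q, q ≠ p → a₁ q = a₂ q) ∧ ∀ t ≤ k, a₁ p t = a₂ p t

/-- `a₁ ≈_p^{≥k} a₂`. -/
def ApproxGE (p : AP) (k : ℕ) (a₁ a₂ : Asg AP) : Prop :=
  (∀ q, q ≠ p → a₁ q = a₂ q) ∧ ∀ t < k, a₁ p t = a₂ p t

/-- Quantifier specifications `ς = (B,S)`. -/
abbrev Spec (AP : Type*) := Set AP × Set AP

/-- A `ς`-functor. -/
def IsSpecFunctor (ς : Spec AP) (F : Asg AP → Val) : Prop :=
  (∀ (k : ℕ) (a₁ a₂ : Asg AP), (∃ p ∈ ς.1, ApproxGT p k a₁ a₂) → F a₁ k = F a₂ k) ∧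
  (∀ (k : ℕ) (a₁ a₂ : Asg AP), (∃ p ∈ ς.2, ApproxGE p k a₁ a₂) → F a₁ k = F a₂ k)

variable [DecidableEq AP]

/-- `ext(a,F,p)`. -/
def extAsg (a : Asg AP) (F : Asg AP → Val) (p : AP) : Asg AP :=
  Function.update a p (F a)

/-- `ext(W,F,p)`. -/
def extSet (W : Set (Asg AP)) (F : Asg AP → Val) (p : AP) : Set (Asg AP) :=
  (fun a => extAsg a F p) '' W

/-- `ext_ς(𝔄,p)`. -/
def extSpec (ς : Spec AP) (𝔄 : Set (Set (Asg AP))) (p : AP) : Set (Set (Asg AP)) :=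
  { Y | ∃ W ∈ 𝔄, ∃ F : Asg AP → Val, IsSpecFunctor ς F ∧ Y = extSet W F p }

/-- Alternation flags. -/
inductive Flag : Type
  | EA : Flag
  | AE : Flag
  deriving DecidableEq

/-- The dual flag. -/
def Flag.dual : Flag → Flag
  | .EA => .AE
  | .AE => .EA

/-- GFG-QPTL formulas (LTL formulas abstracted as arbitrary sets of assignments). -/
inductive Formula (AP : Type*) : Type _ where
  | atom : Set (Asg AP) → Formula AP
  | neg : Formula AP → Formula AP
  | conj : Formula AP → Formula AP → Formula AP
  | disj : Formula AP → Formula AP → Formula AP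
  | ex : AP → Spec AP → Formula AP → Formula AP
  | all : AP → Spec AP → Formula AP → Formula AP

/-- The alternating Hodges semantics `𝔄 ⊨^α φ`. -/
def Sat : Formula AP → Flag → Set (Set (Asg AP)) → Prop
  | .atom Ψ, .EA, 𝔄 => ∃ W ∈ 𝔄, W ⊆ Ψ
  | .atom Ψ, .AE, 𝔄 => ∀ W ∈ 𝔄, W ∩ Ψ ≠ ∅
  | .neg φ, α, 𝔄 => ¬ Sat φ α.dual 𝔄
  | .conj φ₁ φ₂, .EA, 𝔄 =>
      ∀ pr ∈ par 𝔄, (pr.1 ≠ ∅ ∧ Sat φ₁ .EA pr.1) ∨ (pr.2 ≠ ∅ ∧ Sat φ₂ .EA pr.2)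
  | .conj φ₁ φ₂, .AE, 𝔄 =>
      ∀ pr ∈ par (hdual 𝔄), (pr.1 ≠ ∅ ∧ Sat φ₁ .EA pr.1) ∨ (pr.2 ≠ ∅ ∧ Sat φ₂ .EA pr.2)
  | .disj φ₁ φ₂, .AE, 𝔄 =>
      ∃ pr ∈ par 𝔄, (pr.1 ≠ ∅ → Sat φ₁ .AE pr.1) ∧ (pr.2 ≠ ∅ → Sat φ₂ .AE pr.2)
  | .disj φ₁ φ₂, .EA, 𝔄 =>
      ∃ pr ∈ par (hdual 𝔄), (pr.1 ≠ ∅ → Sat φ₁ .AE pr.1) ∧ (pr.2 ≠ ∅ → Sat φ₂ .AE pr.2)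
  | .ex p ς φ, .EA, 𝔄 => Sat φ .EA (extSpec ς 𝔄 p)
  | .ex p ς φ, .AE, 𝔄 => Sat φ .EA (extSpec ς (hdual 𝔄) p)
  | .all p ς φ, .AE, 𝔄 => Sat φ .AE (extSpec ς 𝔄 p)
  | .all p ς φ, .EA, 𝔄 => Sat φ .AE (extSpec ς (hdual 𝔄) p)

section AuxLemmas

variable {X : Type*}

lemma aux_mem_nonempty {𝔄 : Set (Set X)} (h : IsHyp 𝔄) {W : Set X} (hW : W ∈ 𝔄) :
    W.Nonempty :=
  Set.nonempty_iff_ne_empty.2 (fun e => h.2 (e ▸ hW))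

lemma aux_hdual_hyp {𝔄 : Set (Set X)} (h : IsHyp 𝔄) : IsHyp (hdual 𝔄) := by
  classical
  obtain ⟨W₀, hW₀⟩ := Set.nonempty_iff_ne_empty.2 h.1
  have hX : Nonempty X := ⟨(aux_mem_nonempty h hW₀).choose⟩
  set ϑ : Set X → X := fun W => if hW : W.Nonempty then hW.choose else Classical.arbitrary X
    with hϑdef
  have hϑ : IsChoice 𝔄 ϑ := by
    intro W hW
    have hne := aux_mem_nonempty h hW
    simp only [hϑdef, dif_pos hne]
    exact hne.choose_spec
  constructor
  · intro e
    have hmem : ϑ '' 𝔄 ∈ hdual 𝔄 := ⟨ϑ, hϑ, rfl⟩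
    rw [e] at hmem
    exact hmem
  · rintro ⟨ϑ', hϑ', he⟩
    exact h.1 (Set.image_eq_empty.mp he.symm)

lemma aux_hdual_antitone {𝔄₁ 𝔄₂ : Set (Set X)} (h : hle 𝔄₁ 𝔄₂) :
    hle (hdual 𝔄₂) (hdual 𝔄₁) := by
  classical
  rintro Y ⟨ϑ, hϑ, rfl⟩
  set ϑ' : Set X → X := fun W => if hW : ∃ V ∈ 𝔄₂, V ⊆ W then ϑ hW.choose else ϑ W
    with hϑ'def
  refine ⟨ϑ' '' 𝔄₁, ⟨ϑ', ?_, rfl⟩, ?_⟩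
  · intro W hW
    have hW' : ∃ V ∈ 𝔄₂, V ⊆ W := h W hW
    simp only [hϑ'def, dif_pos hW']
    exact hW'.choose_spec.2 (hϑ _ hW'.choose_spec.1)
  · rintro x ⟨W, hW, rfl⟩
    have hW' : ∃ V ∈ 𝔄₂, V ⊆ W := h W hW
    simp only [hϑ'def, dif_pos hW']
    exact ⟨_, hW'.choose_spec.1, rfl⟩

lemma aux_par_hyp₁ {𝔄 𝔞₁ 𝔞₂ : Set (Set X)} (h : IsHyp 𝔄)
    (hp : (𝔞₁, 𝔞₂) ∈ par 𝔄) (hne : 𝔞₁ ≠ ∅) : IsHyp 𝔞₁ :=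
  ⟨hne, fun he => h.2 (hp.1 ▸ Set.mem_union_left _ he)⟩

lemma aux_par_hyp₂ {𝔄 𝔞₁ 𝔞₂ : Set (Set X)} (h : IsHyp 𝔄)
    (hp : (𝔞₁, 𝔞₂) ∈ par 𝔄) (hne : 𝔞₂ ≠ ∅) : IsHyp 𝔞₂ :=
  ⟨hne, fun he => h.2 (hp.1 ▸ Set.mem_union_right _ he)⟩

lemma aux_par_pull {𝔄₁ 𝔄₂ : Set (Set X)} (h : hle 𝔄₁ 𝔄₂)
    {𝔅₁ 𝔅₂ : Set (Set X)} (hp : (𝔅₁, 𝔅₂) ∈ par 𝔄₂) :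
    ∃ 𝔞₁ 𝔞₂, (𝔞₁, 𝔞₂) ∈ par 𝔄₁ ∧ hle 𝔞₁ 𝔅₁ ∧ hle 𝔞₂ 𝔅₂ ∧
      (𝔞₁ ≠ ∅ → 𝔅₁ ≠ ∅) ∧ (𝔞₂ ≠ ∅ → 𝔅₂ ≠ ∅) := by
  classical
  set c : Set X → Set X := fun W => if hW : ∃ V ∈ 𝔄₂, V ⊆ W then hW.choose else W
    with hcdef
  have hc : ∀ W ∈ 𝔄₁, c W ∈ 𝔄₂ ∧ c W ⊆ W := by
    intro W hW
    have hW' : ∃ V ∈ 𝔄₂, V ⊆ W := h W hW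
    simp only [hcdef, dif_pos hW']
    exact hW'.choose_spec
  have hmem : ∀ W ∈ 𝔄₁, c W ∉ 𝔅₁ → c W ∈ 𝔅₂ := by
    intro W hW hn
    have h2 := (hc W hW).1
    rw [← hp.1] at h2
    rcases h2 with h' | h'
    · exact absurd h' hn
    · exact h'
  refine ⟨{W ∈ 𝔄₁ | c W ∈ 𝔅₁}, {W ∈ 𝔄₁ | c W ∉ 𝔅₁}, ⟨?_, ?_⟩, ?_, ?_, ?_, ?_⟩
  · ext W
    by_cases hcW : c W ∈ 𝔅₁ <;> simp [hcW]
  · rw [Set.disjoint_left]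
    rintro W ⟨_, h1⟩ ⟨_, h2⟩
    exact h2 h1
  · rintro W ⟨hW, hc1⟩
    exact ⟨c W, hc1, (hc W hW).2⟩
  · rintro W ⟨hW, hc1⟩
    exact ⟨c W, hmem W hW hc1, (hc W hW).2⟩
  · intro hne
    obtain ⟨W, hW, hc1⟩ := Set.nonempty_iff_ne_empty.2 hne
    exact Set.nonempty_iff_ne_empty.1 ⟨c W, hc1⟩
  · intro hne
    obtain ⟨W, hW, hc1⟩ := Set.nonempty_iff_ne_empty.2 hne
    exact Set.nonempty_iff_ne_empty.1 ⟨c W, hmem W hW hc1⟩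

end AuxLemmas

lemma aux_extSpec_hyp (ς : Spec AP) (p : AP) {𝔄 : Set (Set (Asg AP))} (h : IsHyp 𝔄) :
    IsHyp (extSpec ς 𝔄 p) := by
  obtain ⟨W₀, hW₀⟩ := Set.nonempty_iff_ne_empty.2 h.1
  have hF : IsSpecFunctor (AP := AP) ς (fun _ => fun _ => false) :=
    ⟨fun _ _ _ _ => rfl, fun _ _ _ _ => rfl⟩
  constructor
  · intro e
    have hmem : extSet W₀ (fun _ => fun _ => false) p ∈ extSpec ς 𝔄 p :=
      ⟨W₀, hW₀, _, hF, rfl⟩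
    rw [e] at hmem
    exact hmem
  · rintro ⟨W, hW, F, hFs, hY⟩
    apply h.2
    have hWe : W = ∅ := Set.image_eq_empty.mp hY.symm
    exact hWe ▸ hW

lemma aux_extSpec_mono (ς : Spec AP) (p : AP) {𝔄₁ 𝔄₂ : Set (Set (Asg AP))}
    (h : hle 𝔄₁ 𝔄₂) : hle (extSpec ς 𝔄₁ p) (extSpec ς 𝔄₂ p) := by
  rintro Y ⟨W, hW, F, hF, rfl⟩
  obtain ⟨V, hV, hVW⟩ := h W hW
  exact ⟨extSet V F p, ⟨V, hV, F, hF, rfl⟩, Set.image_mono hVW⟩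

lemma aux_conj_transfer {φ₁ φ₂ : Formula AP}
    (ih₁ : ∀ 𝔄 𝔅 : Set (Set (Asg AP)), IsHyp 𝔄 → IsHyp 𝔅 → hle 𝔄 𝔅 →
      Sat φ₁ .EA 𝔄 → Sat φ₁ .EA 𝔅)
    (ih₂ : ∀ 𝔄 𝔅 : Set (Set (Asg AP)), IsHyp 𝔄 → IsHyp 𝔅 → hle 𝔄 𝔅 →
      Sat φ₂ .EA 𝔄 → Sat φ₂ .EA 𝔅)
    {𝔄 𝔅 : Set (Set (Asg AP))} (hA : IsHyp 𝔄) (hB : IsHyp 𝔅) (h : hle 𝔄 𝔅)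
    (hs : ∀ pr ∈ par 𝔄, (pr.1 ≠ ∅ ∧ Sat φ₁ .EA pr.1) ∨ (pr.2 ≠ ∅ ∧ Sat φ₂ .EA pr.2)) :
    ∀ pr ∈ par 𝔅, (pr.1 ≠ ∅ ∧ Sat φ₁ .EA pr.1) ∨ (pr.2 ≠ ∅ ∧ Sat φ₂ .EA pr.2) := by
  rintro ⟨𝔅₁, 𝔅₂⟩ hp
  obtain ⟨𝔞₁, 𝔞₂, hpa, hl₁, hl₂, hn₁, hn₂⟩ := aux_par_pull h hp
  rcases hs (𝔞₁, 𝔞₂) hpa with ⟨hne, hsat⟩ | ⟨hne, hsat⟩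
  · exact Or.inl ⟨hn₁ hne,
      ih₁ _ _ (aux_par_hyp₁ hA hpa hne) (aux_par_hyp₁ hB hp (hn₁ hne)) hl₁ hsat⟩
  · exact Or.inr ⟨hn₂ hne,
      ih₂ _ _ (aux_par_hyp₂ hA hpa hne) (aux_par_hyp₂ hB hp (hn₂ hne)) hl₂ hsat⟩

lemma aux_disj_transfer {φ₁ φ₂ : Formula AP}
    (ih₁ : ∀ 𝔄 𝔅 : Set (Set (Asg AP)), IsHyp 𝔄 → IsHyp 𝔅 → hle 𝔄 𝔅 →
      Sat φ₁ .AE 𝔅 → Sat φ₁ .AE 𝔄)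
    (ih₂ : ∀ 𝔄 𝔅 : Set (Set (Asg AP)), IsHyp 𝔄 → IsHyp 𝔅 → hle 𝔄 𝔅 →
      Sat φ₂ .AE 𝔅 → Sat φ₂ .AE 𝔄)
    {𝔄 𝔅 : Set (Set (Asg AP))} (hA : IsHyp 𝔄) (hB : IsHyp 𝔅) (h : hle 𝔄 𝔅)
    (hs : ∃ pr ∈ par 𝔅, (pr.1 ≠ ∅ → Sat φ₁ .AE pr.1) ∧ (pr.2 ≠ ∅ → Sat φ₂ .AE pr.2)) :
    ∃ pr ∈ par 𝔄, (pr.1 ≠ ∅ → Sat φ₁ .AE pr.1) ∧ (pr.2 ≠ ∅ → Sat φ₂ .AE pr.2) := by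
  obtain ⟨⟨𝔅₁, 𝔅₂⟩, hp, hs₁, hs₂⟩ := hs
  obtain ⟨𝔞₁, 𝔞₂, hpa, hl₁, hl₂, hn₁, hn₂⟩ := aux_par_pull h hp
  refine ⟨(𝔞₁, 𝔞₂), hpa, fun hne => ?_, fun hne => ?_⟩
  · exact ih₁ _ _ (aux_par_hyp₁ hA hpa hne) (aux_par_hyp₁ hB hp (hn₁ hne)) hl₁
      (hs₁ (hn₁ hne))
  · exact ih₂ _ _ (aux_par_hyp₂ hA hpa hne) (aux_par_hyp₂ hB hp (hn₂ hne)) hl₂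
      (hs₂ (hn₂ hne))

/-- Theorem 2 (Hyperassignment Refinement). -/
theorem hyperassignment_refinement (φ : Formula AP)
    (𝔄₁ 𝔄₂ : Set (Set (Asg AP))) (h₁ : IsHyp 𝔄₁) (h₂ : IsHyp 𝔄₂)
    (hle₁₂ : hle 𝔄₁ 𝔄₂) :
    (Sat φ .EA 𝔄₁ → Sat φ .EA 𝔄₂) ∧ (Sat φ .AE 𝔄₂ → Sat φ .AE 𝔄₁) := by
  induction φ generalizing 𝔄₁ 𝔄₂ with
  | atom Ψ =>
    constructor
    · rintro ⟨W, hW, hWΨ⟩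
      obtain ⟨V, hV, hVW⟩ := hle₁₂ W hW
      exact ⟨V, hV, hVW.trans hWΨ⟩
    · intro hs W hW
      obtain ⟨V, hV, hVW⟩ := hle₁₂ W hW
      intro he
      apply hs V hV
      rw [← Set.subset_empty_iff] at he ⊢
      exact (Set.inter_subset_inter_left Ψ hVW).trans he
  | neg φ ih =>
    have h := ih 𝔄₁ 𝔄₂ h₁ h₂ hle₁₂
    exact ⟨fun hn hs => hn (h.2 hs), fun hn hs => hn (h.1 hs)⟩
  | conj φ₁ φ₂ ih₁ ih₂ =>
    constructor
    · intro hs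
      exact aux_conj_transfer (fun A B hA hB hl => (ih₁ A B hA hB hl).1)
        (fun A B hA hB hl => (ih₂ A B hA hB hl).1) h₁ h₂ hle₁₂ hs
    · intro hs
      exact aux_conj_transfer (fun A B hA hB hl => (ih₁ A B hA hB hl).1)
        (fun A B hA hB hl => (ih₂ A B hA hB hl).1)
        (aux_hdual_hyp h₂) (aux_hdual_hyp h₁) (aux_hdual_antitone hle₁₂) hs
  | disj φ₁ φ₂ ih₁ ih₂ =>
    constructor
    · intro hs
      exact aux_disj_transfer (fun A B hA hB hl => (ih₁ A B hA hB hl).2)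
        (fun A B hA hB hl => (ih₂ A B hA hB hl).2)
        (aux_hdual_hyp h₂) (aux_hdual_hyp h₁) (aux_hdual_antitone hle₁₂) hs
    · intro hs
      exact aux_disj_transfer (fun A B hA hB hl => (ih₁ A B hA hB hl).2)
        (fun A B hA hB hl => (ih₂ A B hA hB hl).2) h₁ h₂ hle₁₂ hs
  | ex p ς φ ih =>
    constructor
    · exact (ih _ _ (aux_extSpec_hyp ς p h₁) (aux_extSpec_hyp ς p h₂)
        (aux_extSpec_mono ς p hle₁₂)).1
    · exact (ih _ _ (aux_extSpec_hyp ς p (aux_hdual_hyp h₂))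
        (aux_extSpec_hyp ς p (aux_hdual_hyp h₁))
        (aux_extSpec_mono ς p (aux_hdual_antitone hle₁₂))).1
  | all p ς φ ih =>
    constructor
    · exact (ih _ _ (aux_extSpec_hyp ς p (aux_hdual_hyp h₂))
        (aux_extSpec_hyp ς p (aux_hdual_hyp h₁))
        (aux_extSpec_mono ς p (aux_hdual_antitone hle₁₂))).2
    · exact (ih _ _ (aux_extSpec_hyp ς p h₁) (aux_extSpec_hyp ς p h₂)
        (aux_extSpec_mono ς p hle₁₂)).2

end GFG
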